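/- Let (α, 𝒜, μ) be a measure space and d ≥ 1. For θ ∈ EuclideanSpace ℝ (Fin d), let p θ : α → ℝ be a positive probability density with respect to μ. Define the score s(θ, x) := gradient at θ of the map θ ↦ log (p θ x), and the Fisher information matrix I(θ) : Matrix (Fin d) (Fin d) ℝ by I(θ) i j := ∫ s(θ, x) i · s(θ, x) j · p θ x ∂μ. Let θ₀ be a point and let φ, ψ : EuclideanSpace ℝ (Fin d) → EuclideanSpace ℝ (Fin d) satisfy ψ ∘ φ = id on a neighborhood of θ₀ and φ ∘ ψ = id on a neighborhood of η₀ := φ(θ₀); assume φ is differentiable at θ₀ with invertible Jacobian matrix J, and ψ is differentiable at η₀. Define the reparameterized family p̃ η := p (ψ η) with Fisher information matrix Ĩ defined analogously. Assume for μ-a.e. x that θ ↦ log (p θ x) is differentiable at θ₀, that all score products appearing in the entries of I(θ₀) and Ĩ(η₀) are integrable against p θ₀ · μ, and that I(θ₀) is invertible. Then for every function F : EuclideanSpace ℝ (Fin d) → ℝ differentiable at θ₀, the natural gradients transform as tangent vectors: Ĩ(η₀)⁻¹ *ᵥ (gradient of F ∘ ψ at η₀) = J *ᵥ (I(θ₀)⁻¹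 *ᵥ (gradient of F at θ₀)). -/

import Mathlib

open MeasureTheory Matrix

noncomputable def score {α : Type*} {d : ℕ}
    (p : EuclideanSpace ℝ (Fin d) → α → ℝ) (θ : EuclideanSpace ℝ (Fin d)) (x : α) :
    EuclideanSpace ℝ (Fin d) :=
  gradient (fun θ => Real.log (p θ x)) θ

noncomputable def fisherInfo {α : Type*} [MeasurableSpace α] (μ : Measure α) {d : ℕ}
    (p : EuclideanSpace ℝ (Fin d) → α → ℝ) (θ : EuclideanSpace ℝ (Fin d)) :
    Matrix (Fin d) (Fin d) ℝ :=
  fun i j => ∫ x, score p θ x i * score p θ x j * p θ x ∂μ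

private lemma euclid_sum_single {d : ℕ} (v : EuclideanSpace ℝ (Fin d)) :
    v = ∑ j, v j • EuclideanSpace.single j (1:ℝ) := by
  ext i
  have : (∑ j, v j • EuclideanSpace.single j (1:ℝ)) i
      = ∑ j, (v j • EuclideanSpace.single j (1:ℝ)) i :=
    by rw [WithLp.ofLp_sum, Finset.sum_apply]
  rw [this]
  simp [EuclideanSpace.single_apply]

private lemma euclid_fderiv_eq_sum {d : ℕ} (f : EuclideanSpace ℝ (Fin d) → ℝ)
    (x v : EuclideanSpace ℝ (Fin d)) :
    fderiv ℝ f x v = ∑ j, gradient f x j * v j := by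
  have h : inner ℝ (gradient f x) v = fderiv ℝ f x v := by
    rw [gradient, InnerProductSpace.toDual_symm_apply]
  rw [← h, PiLp.inner_apply]
  simp [mul_comm]

private lemma euclid_grad_apply {d : ℕ} (f : EuclideanSpace ℝ (Fin d) → ℝ)
    (x : EuclideanSpace ℝ (Fin d)) (i : Fin d) :
    gradient f x i = fderiv ℝ f x (EuclideanSpace.single i 1) := by
  have h : inner ℝ (gradient f x) (EuclideanSpace.single i (1:ℝ))
      = fderiv ℝ f x (EuclideanSpace.single i 1) := by
    rw [gradient, InnerProductSpace.toDual_symm_apply]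
  rw [← h, EuclideanSpace.inner_single_right]
  simp

private lemma clm_apply_eq_sum {d : ℕ} (L : EuclideanSpace ℝ (Fin d) →L[ℝ] EuclideanSpace ℝ (Fin d))
    (v : EuclideanSpace ℝ (Fin d)) (i : Fin d) :
    L v i = ∑ j, L (EuclideanSpace.single j 1) i * v j := by
  conv_lhs => rw [euclid_sum_single v]
  rw [map_sum]
  have : (∑ j, L (v j • EuclideanSpace.single j (1:ℝ))) i
      = ∑ j, (L (v j • EuclideanSpace.single j (1:ℝ))) i :=
    by rw [WithLp.ofLp_sum, Finset.sum_apply]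
  rw [this]
  refine Finset.sum_congr rfl fun j _ => ?_
  rw [L.map_smul]
  simp [mul_comm]

private lemma grad_comp_eq_sum {d : ℕ} (f : EuclideanSpace ℝ (Fin d) → ℝ)
    (ψ : EuclideanSpace ℝ (Fin d) → EuclideanSpace ℝ (Fin d))
    (η : EuclideanSpace ℝ (Fin d))
    (hψ : DifferentiableAt ℝ ψ η) (hf : DifferentiableAt ℝ f (ψ η)) (i : Fin d) :
    gradient (f ∘ ψ) η i
      = ∑ j, gradient f (ψ η) j * fderiv ℝ ψ η (EuclideanSpace.single i 1) j := by
  rw [euclid_grad_apply, fderiv_comp η hf hψ, ContinuousLinearMap.comp_apply,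
    euclid_fderiv_eq_sum]

theorem stmt_9 {α : Type*} [MeasurableSpace α] (μ : Measure α) {d : ℕ} (hd : 1 ≤ d)
    (p : EuclideanSpace ℝ (Fin d) → α → ℝ)
    (hppos : ∀ θ, ∀ᵐ x ∂μ, 0 < p θ x)
    (hpmeas : ∀ θ, Measurable (p θ))
    (hpint : ∀ θ, ∫ x, p θ x ∂μ = 1)
    (θ0 : EuclideanSpace ℝ (Fin d))
    (φ ψ : EuclideanSpace ℝ (Fin d) → EuclideanSpace ℝ (Fin d))
    (hψφ : ∀ᶠ θ in nhds θ0, ψ (φ θ) = θ)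
    (hφψ : ∀ᶠ η in nhds (φ θ0), φ (ψ η) = η)
    (hφdiff : DifferentiableAt ℝ φ θ0)
    (J : Matrix (Fin d) (Fin d) ℝ)
    (hJ : ∀ v : EuclideanSpace ℝ (Fin d),
      (fun i => fderiv ℝ φ θ0 v i) = J.mulVec (fun i => v i))
    (hJinv : IsUnit J)
    (hψdiff : DifferentiableAt ℝ ψ (φ θ0))
    (hdiff : ∀ᵐ x ∂μ, DifferentiableAt ℝ (fun θ => Real.log (p θ x)) θ0)
    (hIint : ∀ i j, Integrable
      (fun x => score p θ0 x i * score p θ0 x j * p θ0 x) μ)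
    (hI'int : ∀ i j, Integrable
      (fun x => score (fun η => p (ψ η)) (φ θ0) x i *
        score (fun η => p (ψ η)) (φ θ0) x j * p (ψ (φ θ0)) x) μ)
    (hIinv : IsUnit (fisherInfo μ p θ0)) :
    ∀ F : EuclideanSpace ℝ (Fin d) → ℝ, DifferentiableAt ℝ F θ0 →
      (fisherInfo μ (fun η => p (ψ η)) (φ θ0))⁻¹.mulVec
          (fun i => gradient (F ∘ ψ) (φ θ0) i)
        = J.mulVec ((fisherInfo μ p θ0)⁻¹.mulVec (fun i => gradient F θ0 i)) := by
  intro F hF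
  set η0 := φ θ0 with hη0
  have hψφ0 : ψ η0 = θ0 := hψφ.self_of_nhds
  -- the Jacobian matrix of ψ at η0
  set K : Matrix (Fin d) (Fin d) ℝ :=
    fun i j => fderiv ℝ ψ η0 (EuclideanSpace.single j 1) i with hKdef
  have hK : ∀ v : EuclideanSpace ℝ (Fin d),
      (fun i => fderiv ℝ ψ η0 v i) = K.mulVec (fun i => v i) := by
    intro v
    funext i
    rw [clm_apply_eq_sum]
    simp [Matrix.mulVec, dotProduct, hKdef]
  -- chain rules: fderiv ψ ∘ fderiv φ = id and vice versa
  have hcomp1 : (fderiv ℝ ψ η0).comp (fderiv ℝ φ θ0) = ContinuousLinearMap.id ℝ _ := by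
    rw [← fderiv_comp θ0 hψdiff hφdiff]
    have : (fun θ => ψ (φ θ)) =ᶠ[nhds θ0] (id : EuclideanSpace ℝ (Fin d) → _) := hψφ
    rw [show (ψ ∘ φ) = fun θ => ψ (φ θ) from rfl, this.fderiv_eq, fderiv_id]
  have hψdiff' : DifferentiableAt ℝ ψ (φ θ0) := hψdiff
  have hφdiff' : DifferentiableAt ℝ φ (ψ η0) := by rw [hψφ0]; exact hφdiff
  have hcomp2 : (fderiv ℝ φ (ψ η0)).comp (fderiv ℝ ψ η0) = ContinuousLinearMap.id ℝ _ := by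
    rw [← fderiv_comp η0 hφdiff' hψdiff]
    have : (fun η => φ (ψ η)) =ᶠ[nhds η0] (id : EuclideanSpace ℝ (Fin d) → _) := hφψ
    rw [show (φ ∘ ψ) = fun η => φ (ψ η) from rfl, this.fderiv_eq, fderiv_id]
  -- K * J = 1 and J * K = 1
  have hmul : ∀ (A B : Matrix (Fin d) (Fin d) ℝ),
      (∀ v : Fin d → ℝ, A.mulVec (B.mulVec v) = v) → A * B = 1 := by
    intro A B h
    ext i j
    have := congrFun (h (Pi.single j 1)) i
    rw [Matrix.mulVec_mulVec] at this
    simpa [Matrix.mulVec_single, Matrix.one_apply, Pi.single_apply, eq_comm] using this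
  have hKJ : K * J = 1 := by
    refine hmul K J fun v => ?_
    have h1 := hJ (WithLp.toLp 2 v)
    have h2 := hK (fderiv ℝ φ θ0 (WithLp.toLp 2 v))
    have h3 : fderiv ℝ ψ η0 (fderiv ℝ φ θ0 (WithLp.toLp 2 v))
        = (WithLp.toLp 2 v) := by
      have := congrArg (fun L => L (WithLp.toLp 2 v)) hcomp1
      simpa using this
    calc K.mulVec (J.mulVec v) = K.mulVec (fun i => fderiv ℝ φ θ0 (WithLp.toLp 2 v) i) := by
          rw [h1]
      _ = fun i => fderiv ℝ ψ η0 (fderiv ℝ φ θ0 (WithLp.toLp 2 v)) i := by rw [h2]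
      _ = v := by rw [h3]
  have hJK : J * K = 1 := by
    refine hmul J K fun v => ?_
    have h1 := hK (WithLp.toLp 2 v)
    have h2 := hJ (fderiv ℝ ψ η0 (WithLp.toLp 2 v))
    have h3 : fderiv ℝ φ (ψ η0) (fderiv ℝ ψ η0 (WithLp.toLp 2 v))
        = (WithLp.toLp 2 v) := by
      have := congrArg (fun L => L (WithLp.toLp 2 v)) hcomp2
      simpa using this
    have h2' : (fun i => fderiv ℝ φ (ψ η0) (fderiv ℝ ψ η0 (WithLp.toLp 2 v)) i)
        = J.mulVec (fun i => fderiv ℝ ψ η0 (WithLp.toLp 2 v) i) := by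
      rw [hψφ0]; exact hJ _
    calc J.mulVec (K.mulVec v)
        = J.mulVec (fun i => fderiv ℝ ψ η0 (WithLp.toLp 2 v) i) := by rw [h1]
      _ = fun i => fderiv ℝ φ (ψ η0) (fderiv ℝ ψ η0 (WithLp.toLp 2 v)) i := by
          rw [h2']
      _ = v := by rw [h3]
  -- score transformation
  have hscore : ∀ᵐ x ∂μ, ∀ i, score (fun η => p (ψ η)) η0 x i
      = ∑ k, K k i * score p θ0 x k := by
    filter_upwards [hdiff] with x hx i
    have hfd : DifferentiableAt ℝ (fun θ => Real.log (p θ x)) (ψ η0) := by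
      rw [hψφ0]; exact hx
    have : score (fun η => p (ψ η)) η0 x i
        = gradient ((fun θ => Real.log (p θ x)) ∘ ψ) η0 i := rfl
    rw [this, grad_comp_eq_sum _ _ _ hψdiff hfd i]
    refine Finset.sum_congr rfl fun k _ => ?_
    rw [hψφ0]
    simp [hKdef, score, mul_comm]
  -- Fisher information transformation
  have hFtrans : fisherInfo μ (fun η => p (ψ η)) η0 = Kᵀ * fisherInfo μ p θ0 * K := by
    ext i j
    have hae : (fun x => score (fun η => p (ψ η)) η0 x i * score (fun η => p (ψ η)) η0 x j
          * p (ψ η0) x)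
        =ᵐ[μ] (fun x => ∑ k, ∑ l, (K k i * K l j) *
          (score p θ0 x k * score p θ0 x l * p θ0 x)) := by
      filter_upwards [hscore] with x hx
      rw [hψφ0, hx i, hx j, Finset.sum_mul, Finset.sum_mul]
      refine Finset.sum_congr rfl fun k _ => ?_
      rw [Finset.mul_sum, Finset.sum_mul]
      exact Finset.sum_congr rfl fun l _ => by ring
    have : fisherInfo μ (fun η => p (ψ η)) η0 i j
        = ∫ x, ∑ k, ∑ l, (K k i * K l j) *
            (score p θ0 x k * score p θ0 x l * p θ0 x) ∂μ := by
      rw [show fisherInfo μ (fun η => p (ψ η)) η0 i j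
          = ∫ x, score (fun η => p (ψ η)) η0 x i * score (fun η => p (ψ η)) η0 x j
            * p (ψ η0) x ∂μ from rfl]
      exact integral_congr_ae hae
    rw [this, integral_finset_sum _ (fun k _ =>
      integrable_finset_sum _ fun l _ => (hIint k l).const_mul _)]
    have : ∀ k, ∫ x, ∑ l, (K k i * K l j) *
        (score p θ0 x k * score p θ0 x l * p θ0 x) ∂μ
        = ∑ l, (K k i * K l j) * fisherInfo μ p θ0 k l := by
      intro k
      rw [integral_finset_sum _ fun l _ => (hIint k l).const_mul _]
      exact Finset.sum_congr rfl fun l _ => integral_const_mul _ _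
    rw [Finset.sum_congr rfl fun k _ => this k]
    rw [Matrix.mul_apply]
    rw [Finset.sum_comm]
    refine Finset.sum_congr rfl fun l _ => ?_
    rw [Matrix.mul_apply, Finset.sum_mul]
    exact Finset.sum_congr rfl fun k _ => by
      simp [Matrix.transpose_apply]; ring
  -- gradient transformation for F
  have hgradF : (fun i => gradient (F ∘ ψ) η0 i)
      = Kᵀ.mulVec (fun i => gradient F θ0 i) := by
    funext i
    have hFd : DifferentiableAt ℝ F (ψ η0) := by rw [hψφ0]; exact hF
    rw [grad_comp_eq_sum F ψ η0 hψdiff hFd i]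
    simp only [Matrix.mulVec, dotProduct, Matrix.transpose_apply, hKdef]
    refine Finset.sum_congr rfl fun k _ => ?_
    rw [hψφ0]; exact mul_comm _ _
  -- final linear algebra
  have hKinv : K⁻¹ = J := Matrix.inv_eq_right_inv hKJ
  rw [hgradF, hFtrans, Matrix.mul_inv_rev, Matrix.mul_inv_rev, ← Matrix.transpose_nonsing_inv,
    hKinv, Matrix.mulVec_mulVec, Matrix.mulVec_mulVec]
  congr 1
  rw [mul_assoc, mul_assoc, ← Matrix.transpose_mul, hKJ, Matrix.transpose_one, mul_one]
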